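/- Let (X, ‖·‖) be a Banach space and T : X → CB(X) a multivalued mapping. Suppose there exist b ∈ [0, ∞) and θ ∈ [0, b+1), and set λ = 1/(b+1), r = θλ and ψ(r) = λ/(1+r), such that for all x, y ∈ X: ψ(r)·d(x, Tx) ≤ ‖x − y‖ implies H(bx + Tx, by + Ty) ≤ θ‖x − y‖, where bx + Tx denotes the set {bx + u : u ∈ Tx}. Then the fixed point set Fix(T) = {x ∈ X : x ∈ Tx} is nonempty. -/

import Mathlib

open Metric Set Pointwise

/-- Kikkawa–Suzuki type fixed point theorem for multivalued maps. -/
lemma suzuki_mv {Y : Type*} [MetricSpace Y] [CompleteSpace Y] [Nonempty Y]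
    (S : Y → Set Y) (hne : ∀ y, (S y).Nonempty) (hcl : ∀ y, IsClosed (S y))
    (hfin : ∀ x y, EMetric.hausdorffEdist (S x) (S y) ≠ ⊤)
    (r : ℝ) (hr0 : 0 ≤ r) (hr1 : r < 1)
    (H : ∀ x y, infDist x (S x) / (1 + r) ≤ dist x y →
      hausdorffDist (S x) (S y) ≤ r * dist x y) :
    ∃ z, z ∈ S z := by
  by_contra hfix
  push_neg at hfix
  set r1 : ℝ := (r + 1) / 2 with hr1def
  have hrr1 : r < r1 := by rw [hr1def]; linarith
  have hr1lt : r1 < 1 := by rw [hr1def]; linarith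
  -- premise of H holds when y ∈ S x
  have key : ∀ x y, y ∈ S x → hausdorffDist (S x) (S y) ≤ r * dist x y := by
    intro x y hy
    refine H x y ?_
    have h1 : infDist x (S x) ≤ dist x y := infDist_le_dist_of_mem hy
    have h2 : (0:ℝ) < 1 + r := by linarith
    rw [div_le_iff₀ h2]
    nlinarith [infDist_nonneg (x := x) (s := S x), dist_nonneg (x := x) (y := y)]
  have step : ∀ x y, y ∈ S x → ∃ z ∈ S y, dist y z ≤ r1 * dist x y := by
    intro x y hy
    have hxy : 0 < dist x y := by
      rcases lt_or_eq_of_le (dist_nonneg (x := x) (y := y)) with h | h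
      · exact h
      · exact absurd (dist_eq_zero.mp h.symm ▸ hy) (hfix x)
    have hd : infDist y (S y) ≤ r * dist x y :=
      le_trans (infDist_le_hausdorffDist_of_mem hy (hfin x y)) (key x y hy)
    have hlt : infDist y (S y) < r1 * dist x y := lt_of_le_of_lt hd (by nlinarith)
    obtain ⟨z, hz, hzd⟩ := (infDist_lt_iff (hne y)).mp hlt
    exact ⟨z, hz, hzd.le⟩
  -- construct the iteration
  obtain ⟨y0, hy0⟩ := hne (Classical.arbitrary Y)
  have next : ∀ p : {p : Y × Y // p.2 ∈ S p.1},
      ∃ q : {p : Y × Y // p.2 ∈ S p.1},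
        q.1.1 = p.1.2 ∧ dist q.1.1 q.1.2 ≤ r1 * dist p.1.1 p.1.2 := by
    rintro ⟨⟨x, y⟩, hy⟩
    obtain ⟨z, hz, hzd⟩ := step x y hy
    exact ⟨⟨(y, z), hz⟩, rfl, hzd⟩
  choose f hf1 hf2 using next
  set u : ℕ → {p : Y × Y // p.2 ∈ S p.1} :=
    fun n => f^[n] ⟨(Classical.arbitrary Y, y0), hy0⟩ with hu
  have hu_succ : ∀ n, u (n + 1) = f (u n) := fun n => Function.iterate_succ_apply' f n _
  set v : ℕ → Y := fun n => (u n).1.1 with hv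
  have hvsnd : ∀ n, v (n + 1) = (u n).1.2 := by
    intro n
    show (u (n + 1)).1.1 = (u n).1.2
    rw [hu_succ n, hf1]
  have hvS : ∀ n, v (n + 1) ∈ S (v n) := by
    intro n; rw [hvsnd n]; exact (u n).2
  have hstep' : ∀ n, dist (v (n + 1)) (v (n + 2)) ≤ r1 * dist (v n) (v (n + 1)) := by
    intro n
    have := hf2 (u n)
    rw [← hu_succ n] at this
    calc dist (v (n + 1)) (v (n + 2)) = dist ((u (n+1)).1.1) ((u (n+1)).1.2) := by
          rw [hvsnd (n+1)]
      _ ≤ r1 * dist ((u n).1.1) ((u n).1.2) := this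
      _ = r1 * dist (v n) (v (n + 1)) := by rw [← hvsnd n]
  have hgeom : ∀ n, dist (v n) (v (n + 1)) ≤ dist (v 0) (v 1) * r1 ^ n := by
    intro n
    induction n with
    | zero => simp
    | succ n ih =>
      calc dist (v (n + 1)) (v (n + 2)) ≤ r1 * dist (v n) (v (n + 1)) := hstep' n
        _ ≤ r1 * (dist (v 0) (v 1) * r1 ^ n) := by nlinarith
        _ = dist (v 0) (v 1) * r1 ^ (n + 1) := by ring
  have hcauchy : CauchySeq v := cauchySeq_of_le_geometric r1 (dist (v 0) (v 1)) hr1lt hgeom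
  obtain ⟨z, hz⟩ := cauchySeq_tendsto_of_complete hcauchy
  have htend : ∀ δ : ℝ, 0 < δ → ∃ N : ℕ, ∀ n ≥ N, dist (v n) z < δ :=
    fun δ hδ => Metric.tendsto_atTop.mp hz δ hδ
  -- Claim A : for x ≠ z, infDist z (S x) ≤ r * dist z x
  have claimA : ∀ x, x ≠ z → infDist z (S x) ≤ r * dist z x := by
    intro x hx
    have hdzx : 0 < dist z x := dist_pos.mpr (fun h => hx h.symm)
    refine le_of_forall_pos_le_add ?_
    intro ε hε
    set δ := min (ε / 2) (dist z x / 3) with hδ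
    have hδ0 : 0 < δ := lt_min (by linarith) (by linarith)
    obtain ⟨N, hN⟩ := htend δ hδ0
    have h1 : dist (v N) z < δ := hN N le_rfl
    have h2 : dist (v (N + 1)) z < δ := hN (N + 1) (by omega)
    have hδ1 : δ ≤ ε / 2 := min_le_left _ _
    have hδ2 : δ ≤ dist z x / 3 := min_le_right _ _
    -- premise of H (v N) x
    have hprem : infDist (v N) (S (v N)) / (1 + r) ≤ dist (v N) x := by
      have ha : infDist (v N) (S (v N)) ≤ 2 * δ := by
        calc infDist (v N) (S (v N)) ≤ dist (v N) (v (N + 1)) :=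
              infDist_le_dist_of_mem (hvS N)
          _ ≤ dist (v N) z + dist z (v (N + 1)) := dist_triangle _ _ _
          _ ≤ 2 * δ := by rw [dist_comm z (v (N+1))]; linarith
      have hb : 2 * δ ≤ dist (v N) x := by
        have := dist_triangle z (v N) x
        rw [dist_comm z (v N)] at this
        linarith
      have h1r : (1:ℝ) ≤ 1 + r := by linarith
      have := infDist_nonneg (x := v N) (s := S (v N))
      calc infDist (v N) (S (v N)) / (1 + r) ≤ infDist (v N) (S (v N)) := by
            rw [div_le_iff₀ (by linarith : (0:ℝ) < 1 + r)]; nlinarith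
        _ ≤ 2 * δ := ha
        _ ≤ dist (v N) x := hb
    have hH := H (v N) x hprem
    calc infDist z (S x) ≤ infDist (v (N + 1)) (S x) + dist z (v (N + 1)) :=
          infDist_le_infDist_add_dist
      _ ≤ hausdorffDist (S (v N)) (S x) + dist z (v (N + 1)) :=
          add_le_add_left (infDist_le_hausdorffDist_of_mem (hvS N) (hfin (v N) x)) _
      _ ≤ r * dist (v N) x + δ := by
          rw [dist_comm z (v (N+1))]; linarith
      _ ≤ r * (dist (v N) z + dist z x) + δ := by
          have := dist_triangle (v N) z x; nlinarith
      _ ≤ r * dist z x + ε := by nlinarith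
  -- Claim B : for x ≠ z, hausdorffDist (S x) (S z) ≤ r * dist x z
  have claimB : ∀ x, x ≠ z → hausdorffDist (S x) (S z) ≤ r * dist x z := by
    intro x hx
    refine H x z ?_
    have h1 : infDist x (S x) ≤ infDist z (S x) + dist x z := infDist_le_infDist_add_dist
    have h2 := claimA x hx
    rw [div_le_iff₀ (by linarith : (0:ℝ) < 1 + r)]
    rw [dist_comm z x] at h2
    linarith
  -- Conclusion: infDist z (S z) = 0
  have hzero : infDist z (S z) ≤ 0 := by
    refine le_of_forall_pos_le_add ?_
    intro ε hε
    obtain ⟨N, hN⟩ := htend (ε / 2) (by linarith)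
    have h1 : dist (v N) z < ε / 2 := hN N le_rfl
    have h2 : dist (v (N + 1)) z < ε / 2 := hN (N + 1) (by omega)
    rcases eq_or_ne (v N) z with h | h
    · have : v (N + 1) ∈ S z := h ▸ hvS N
      calc infDist z (S z) ≤ dist z (v (N + 1)) := infDist_le_dist_of_mem this
        _ ≤ 0 + ε := by rw [dist_comm]; linarith
    · calc infDist z (S z) ≤ infDist (v (N + 1)) (S z) + dist z (v (N + 1)) :=
            infDist_le_infDist_add_dist
        _ ≤ hausdorffDist (S (v N)) (S z) + dist z (v (N + 1)) :=
            add_le_add_left (infDist_le_hausdorffDist_of_mem (hvS N) (hfin (v N) z)) _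
        _ ≤ r * dist (v N) z + dist z (v (N + 1)) := by
            have := claimB (v N) h; linarith
        _ ≤ 0 + ε := by rw [dist_comm z (v (N+1))]; nlinarith
  have : z ∈ S z := by
    by_contra hmem
    have := ((hcl z).notMem_iff_infDist_pos (hne z)).mp hmem
    linarith
  exact hfix z this

open Metric Set Pointwise

section main

variable {X : Type*} [NormedAddCommGroup X] [NormedSpace ℝ X]

lemma aux_smul_hd (c : ℝ) (hc : 0 < c) (A B : Set X) (hA : A.Nonempty) (hB : B.Nonempty)
    (hAb : Bornology.IsBounded A) (hBb : Bornology.IsBounded B) :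
    hausdorffDist (c • A) (c • B) ≤ c * hausdorffDist A B := by
  have hfin : EMetric.hausdorffEdist A B ≠ ⊤ :=
    hausdorffEdist_ne_top_of_nonempty_of_bounded hA hB hAb hBb
  have hle : EMetric.hausdorffEdist (c • A) (c • B)
      ≤ (‖c‖₊ : ENNReal) * EMetric.hausdorffEdist A B := by
    apply EMetric.hausdorffEdist_le_of_infEdist
    · rintro x ⟨a, ha, rfl⟩
      calc EMetric.infEdist (c • a) (c • B) = ‖c‖₊ • EMetric.infEdist a B :=
            infEdist_smul₀ (ne_of_gt hc) B a
        _ ≤ (‖c‖₊ : ENNReal) * EMetric.hausdorffEdist A B := by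
            rw [ENNReal.smul_def, smul_eq_mul]
            exact mul_le_mul' le_rfl (EMetric.infEdist_le_hausdorffEdist_of_mem ha)
    · rintro x ⟨b, hb, rfl⟩
      calc EMetric.infEdist (c • b) (c • A) = ‖c‖₊ • EMetric.infEdist b A :=
            infEdist_smul₀ (ne_of_gt hc) A b
        _ ≤ (‖c‖₊ : ENNReal) * EMetric.hausdorffEdist A B := by
            rw [ENNReal.smul_def, smul_eq_mul]
            rw [show EMetric.hausdorffEdist A B = EMetric.hausdorffEdist B A from hausdorffEDist_comm]
            exact mul_le_mul' le_rfl (EMetric.infEdist_le_hausdorffEdist_of_mem hb)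
  have hrhs : (‖c‖₊ : ENNReal) * EMetric.hausdorffEdist A B ≠ ⊤ :=
    ENNReal.mul_ne_top ENNReal.coe_ne_top hfin
  have := ENNReal.toReal_mono hrhs hle
  rw [ENNReal.toReal_mul] at this
  simpa [hausdorffDist, EMetric.hausdorffEdist, Real.norm_eq_abs, abs_of_pos hc] using this

end main

set_option maxHeartbeats 1000000 in
theorem stmt_6 {X : Type*} [NormedAddCommGroup X] [NormedSpace ℝ X] [CompleteSpace X]
    (T : X → Set X)
    (hne : ∀ x : X, (T x).Nonempty)
    (hcl : ∀ x : X, IsClosed (T x))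
    (hbd : ∀ x : X, Bornology.IsBounded (T x))
    (b θ : ℝ) (hb : 0 ≤ b) (hθ0 : 0 ≤ θ) (hθ : θ < b + 1)
    (H : ∀ x y : X,
      (1 / (b + 1)) / (1 + θ * (1 / (b + 1))) * Metric.infDist x (T x) ≤ ‖x - y‖ →
      Metric.hausdorffDist ((fun u => b • x + u) '' T x) ((fun u => b • y + u) '' T y)
        ≤ θ * ‖x - y‖) :
    ∃ x : X, x ∈ T x := by
  have hb1 : (0:ℝ) < b + 1 := by linarith
  set lam : ℝ := (b + 1)⁻¹ with hlam
  have hlam0 : 0 < lam := inv_pos.mpr hb1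
  have hlamne : lam ≠ 0 := ne_of_gt hlam0
  set r : ℝ := θ * lam with hr
  have hr0 : 0 ≤ r := mul_nonneg hθ0 hlam0.le
  have hr1 : r < 1 := by
    rw [hr, hlam]
    rw [mul_inv_lt_iff₀ hb1]
    linarith
  -- auxiliary: translated sets
  set A : X → Set X := fun x => (fun u => b • x + u) '' T x with hA
  have hAne : ∀ x, (A x).Nonempty := fun x => (hne x).image _
  have hAbd : ∀ x, Bornology.IsBounded (A x) := by
    intro x
    have : LipschitzWith 1 (fun u : X => b • x + u) :=
      LipschitzWith.of_dist_le_mul (fun a c => by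
        simp [dist_eq_norm, add_sub_add_left_eq_sub])
    exact this.isBounded_image (hbd x)
  have hiso : ∀ x : X, Isometry (fun u : X => b • x + u) := by
    intro x
    apply Isometry.of_dist_eq
    intro a c
    simp [dist_eq_norm, add_sub_add_left_eq_sub]
  -- the single-valued-style contraction map S
  set S : X → Set X := fun x => lam • A x with hS
  have hSne : ∀ x, (S x).Nonempty := fun x => (hAne x).smul_set
  have hScl : ∀ x, IsClosed (S x) := by
    intro x
    have hAcl : IsClosed (A x) := by
      have : A x = (Homeomorph.addLeft (b • x)) '' T x := rfl
      rw [this]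
      exact (Homeomorph.addLeft (b • x)).isClosedMap _ (hcl x)
    exact hAcl.smul_of_ne_zero hlamne
  have hSbd : ∀ x, Bornology.IsBounded (S x) := fun x => (hAbd x).smul₀ lam
  have hfin : ∀ x y, EMetric.hausdorffEdist (S x) (S y) ≠ ⊤ := fun x y =>
    hausdorffEdist_ne_top_of_nonempty_of_bounded (hSne x) (hSne y) (hSbd x) (hSbd y)
  -- infDist relation
  have hinf : ∀ x : X, infDist x (S x) = lam * infDist x (T x) := by
    intro x
    have hx : x = lam • ((b + 1) • x) := by
      rw [smul_smul, hlam, inv_mul_cancel₀ (ne_of_gt hb1), one_smul]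
    have h1 : infDist x (S x) = ‖lam‖ * infDist ((b + 1) • x) (A x) := by
      have := infDist_smul₀ (E := X) (𝕜 := ℝ) hlamne (A x) ((b + 1) • x)
      rw [← hx] at this
      exact this
    rw [h1, Real.norm_eq_abs, abs_of_pos hlam0]
    congr 1
    have h2 : (b + 1) • x = b • x + x := by
      rw [add_smul, one_smul]
    rw [h2, hA]
    exact infDist_image (hiso x) (x := x) (t := T x)
  -- apply the abstract Suzuki lemma
  have hnonempty : Nonempty X := ⟨0⟩
  have hmain : ∀ x y : X, infDist x (S x) / (1 + r) ≤ dist x y →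
      hausdorffDist (S x) (S y) ≤ r * dist x y := by
    intro x y hprem
    have hprem' : (1 / (b + 1)) / (1 + θ * (1 / (b + 1))) * infDist x (T x) ≤ ‖x - y‖ := by
      rw [hinf] at hprem
      rw [dist_eq_norm] at hprem
      have e1 : (1 : ℝ) / (b + 1) = lam := one_div _
      rw [e1]
      have e2 : lam / (1 + θ * lam) * infDist x (T x)
          = lam * infDist x (T x) / (1 + r) := by
        rw [hr]; ring
      rw [e2]
      exact hprem
    have hHxy := H x y hprem'
    calc hausdorffDist (S x) (S y) ≤ lam * hausdorffDist (A x) (A y) :=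
          aux_smul_hd lam hlam0 (A x) (A y) (hAne x) (hAne y) (hAbd x) (hAbd y)
      _ ≤ lam * (θ * ‖x - y‖) := by
          apply mul_le_mul_of_nonneg_left _ hlam0.le
          exact hHxy
      _ = r * dist x y := by rw [dist_eq_norm, hr]; ring
  obtain ⟨z, hz⟩ := suzuki_mv S hSne hScl hfin r hr0 hr1 hmain
  -- translate back: z ∈ S z implies z ∈ T z
  rw [hS] at hz
  obtain ⟨w, hw, hwz⟩ := hz
  obtain ⟨u, hu, huw⟩ := hw
  have huw' : b • z + u = w := huw
  have hwz' : lam • w = z := hwz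
  have hthis : z = lam • (b • z + u) := by rw [huw', hwz']
  have h2 : (b + 1) • z = b • z + u := by
    have h := congrArg (fun t : X => (b + 1) • t) hthis
    simp only [smul_smul] at h
    rw [hlam, mul_inv_cancel₀ (ne_of_gt hb1), one_smul] at h
    exact h
  have h3 : u = z := by
    have h4 : b • z + z = b • z + u := by
      rw [← h2, add_smul, one_smul]
    exact (add_left_cancel h4).symm
  exact ⟨z, by rwa [h3] at hu⟩
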